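/- For every integer n ≥ 0, the q-Bernoulli numbers of the second kind satisfy ∑_{k=0}^{n} q^{k-1} b_k(q) b_{n-k}(q) = -[n-1]_q · b_n(q) - [n-2]_q · b_{n-1}(q), as an identity in the field of rational functions in q, where by convention b_m(q) = 0 for m < 0. -/

import Mathlib

/-- The `q`-integer `[n]_q = (1 - q^n)/(1 - q)` for an arbitrary integer `n`,
as an element of the field `ℚ(q)` of rational functions. -/
noncomputable def qInt (n : ℤ) : RatFunc ℚ :=
  (1 - (RatFunc.X : RatFunc ℚ) ^ n) / (1 - RatFunc.X)

/-- The `q`-analogue of the Bernoulli numbers of the second kind: `b_0(q) = 1`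
and for `n ≥ 1`, `b_n(q) = -∑_{k=1}^{n} (-1)^k b_{n-k}(q)/[k+1]_q`. -/
noncomputable def qBernoulliSnd : ℕ → RatFunc ℚ
  | 0 => 1
  | n + 1 =>
      -∑ k ∈ Finset.range (n + 1),
        (-1 : RatFunc ℚ) ^ (k + 1) * qBernoulliSnd (n - k) / qInt ((k : ℤ) + 2)
  decreasing_by exact Nat.lt_succ_of_le (Nat.sub_le n k)

/-- Extension to integer indices, with `b_m(q) = 0` for `m < 0`. -/
noncomputable def qBernoulliSndInt (m : ℤ) : RatFunc ℚ :=
  if m < 0 then 0 else qBernoulliSnd m.toNat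

namespace QB
open PowerSeries Finset

abbrev R := RatFunc ℚ
noncomputable abbrev q : R := RatFunc.X

lemma hq0 : (q : R) ≠ 0 := RatFunc.X_ne_zero

lemma hXpow : ∀ m : ℕ, m ≠ 0 → (q : R) ^ m ≠ 1 := by
  intro m hm h
  have : (Polynomial.X : Polynomial ℚ) ^ m = 1 := by
    apply RatFunc.algebraMap_injective ℚ
    simpa [map_pow, RatFunc.algebraMap_X] using h
  have := congrArg (Polynomial.eval 0) this
  simp [hm] at this

lemma h1X : (1 : R) - q ≠ 0 := by
  intro h
  have : (q : R) ^ 1 = 1 := by rw [pow_one]; linear_combination -h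
  exact hXpow 1 one_ne_zero this

lemma qInt_natCast (m : ℕ) : qInt m = (1 - q ^ m) / (1 - q) := by
  rw [qInt, zpow_natCast]

lemma qInt_zero : qInt 0 = 0 := by simp [qInt]

lemma qInt_one : qInt 1 = 1 := by
  rw [qInt, zpow_one, div_self h1X]

lemma qInt_ne_zero (m : ℕ) (hm : m ≠ 0) : qInt m ≠ 0 := by
  rw [qInt_natCast, div_ne_zero_iff]
  exact ⟨sub_ne_zero.mpr fun h => hXpow m hm h.symm, h1X⟩

lemma qInt_add' (a b : ℕ) : qInt ((a : ℤ) + b) = qInt a + q ^ a * qInt b := by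
  rw [show ((a : ℤ) + b) = ((a + b : ℕ) : ℤ) by push_cast; ring,
    qInt_natCast, qInt_natCast, qInt_natCast, pow_add]
  field_simp
  ring

/-- The `q`-derivative on power series, acting on coefficients by
`(Dq f)_n = [n+1]_q f_{n+1}`. -/
noncomputable def Dq (f : PowerSeries R) : PowerSeries R :=
  PowerSeries.mk fun n => qInt ((n : ℤ) + 1) * PowerSeries.coeff (n + 1) f

lemma coeff_Dq (f : PowerSeries R) (n : ℕ) :
    coeff n (Dq f) = qInt ((n : ℤ) + 1) * coeff (n + 1) f :=
  coeff_mk _ _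

lemma Dq_X : Dq (X : PowerSeries R) = 1 := by
  ext n
  rw [coeff_Dq]
  cases n with
  | zero => simp [qInt_one]
  | succ m => simp [coeff_X]

lemma Dq_mul (f g : PowerSeries R) :
    Dq (f * g) = rescale q f * Dq g + Dq f * g := by
  ext n
  rw [map_add, coeff_Dq, coeff_mul, coeff_mul, coeff_mul, Finset.mul_sum]
  have key : ∀ p ∈ antidiagonal (n + 1),
      qInt ((n : ℤ) + 1) * (coeff p.1 f * coeff p.2 g) =
        q ^ p.1 * coeff p.1 f * (qInt p.2 * coeff p.2 g)
          + qInt p.1 * coeff p.1 f * coeff p.2 g := by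
    intro p hp
    have h : ((p.1 : ℤ) + p.2) = (n : ℤ) + 1 := by
      have := Finset.HasAntidiagonal.mem_antidiagonal.mp hp
      omega
    rw [← h, qInt_add' p.1 p.2]
    ring
  rw [Finset.sum_congr rfl key, Finset.sum_add_distrib]
  congr 1
  · rw [Finset.Nat.sum_antidiagonal_succ'
      (f := fun p => q ^ p.1 * coeff p.1 f * (qInt p.2 * coeff p.2 g))]
    simp only [coeff_rescale, coeff_Dq, qInt_zero]
    push_cast
    ring_nf
    simp [qInt_zero]
  · rw [Finset.Nat.sum_antidiagonal_succ
      (f := fun p => qInt p.1 * coeff p.1 f * coeff p.2 g)]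
    simp only [coeff_Dq, qInt_zero]
    push_cast
    ring_nf
    simp [qInt_zero]

/-- The `q`-logarithm series `log_q(1+t)`. -/
noncomputable def Lq : PowerSeries R :=
  PowerSeries.mk fun n => if n = 0 then 0 else (-1 : R) ^ (n - 1) / qInt n

/-- The generating series of the `q`-Bernoulli numbers of the second kind. -/
noncomputable def F : PowerSeries R := PowerSeries.mk fun n => qBernoulliSnd n

lemma F_mul_Lq : F * Lq = X := by
  ext n
  rw [coeff_mul]
  match n with
  | 0 => simp [Lq, F]
  | 1 =>
    rw [Finset.Nat.sum_antidiagonal_succ]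
    simp [Lq, F, qInt_one, qBernoulliSnd]
  | (m + 2) =>
    rw [Finset.Nat.sum_antidiagonal_succ', Finset.Nat.sum_antidiagonal_succ']
    have hswap : ∑ p ∈ antidiagonal m, coeff p.1 F * coeff (p.2 + 1 + 1) Lq
        = ∑ k ∈ range (m + 1), coeff (m - k) F * coeff (k + 1 + 1) Lq := by
      rw [← Finset.Nat.sum_antidiagonal_eq_sum_range_succ
        (f := fun a b => coeff b F * coeff (a + 1 + 1) Lq)]
      have := Finset.Nat.sum_antidiagonal_swap (n := m)
        (f := fun p => coeff p.2 F * coeff (p.1 + 1 + 1) Lq)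
      simpa using this
    rw [hswap]
    have hsum : ∑ k ∈ range (m + 1), coeff (m - k) F * coeff (k + 1 + 1) Lq
        = -qBernoulliSnd (m + 1) := by
      rw [qBernoulliSnd, neg_neg]
      refine Finset.sum_congr rfl fun k _ => ?_
      simp only [F, Lq, coeff_mk, Nat.add_sub_cancel]
      push_cast
      ring_nf
    rw [hsum]
    simp [Lq, F, qInt_one, coeff_X]

lemma one_add_X_mul_Dq_Lq : (1 + X) * Dq Lq = (1 : PowerSeries R) := by
  ext n
  have hc : ∀ m : ℕ, coeff m (Dq Lq) = (-1 : R) ^ m := by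
    intro m
    rw [coeff_Dq]
    simp only [Lq, coeff_mk, Nat.succ_ne_zero, if_false, Nat.add_sub_cancel]
    rw [mul_div_assoc']
    rw [show ((m : ℤ) + 1) = ((m + 1 : ℕ) : ℤ) by push_cast; ring]
    rw [mul_comm, mul_div_assoc, div_self (qInt_ne_zero (m + 1) (Nat.succ_ne_zero m)), mul_one]
  rw [add_mul, one_mul, map_add]
  cases n with
  | zero => simp [hc 0, coeff_zero_X_mul]
  | succ m => simp [hc, coeff_succ_X_mul, coeff_one]; ring

lemma main_ps :
    rescale q F * F + (X * Dq F + X * (X * Dq F)) = (1 + X) * F := by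
  have h1 : F * Lq = X := F_mul_Lq
  have h2 : (1 + X) * Dq Lq = (1 : PowerSeries R) := one_add_X_mul_Dq_Lq
  have h4 : rescale q F * Dq Lq + Dq F * Lq = 1 := by
    rw [← Dq_mul, h1, Dq_X]
  linear_combination ((1 + X) * F) * h4 - ((1 + X) * Dq F) * h1 - (rescale q F * F) * h2

lemma coeff_X_mul_Dq_F (m : ℕ) :
    coeff m (X * Dq F) = qInt m * qBernoulliSnd m := by
  cases m with
  | zero => simp [coeff_zero_X_mul, qInt_zero]
  | succ k =>
    rw [coeff_succ_X_mul, coeff_Dq]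
    simp only [F, coeff_mk]
    push_cast
    ring

lemma key (n : ℕ) :
    ∑ p ∈ antidiagonal n, q ^ p.1 * qBernoulliSnd p.1 * qBernoulliSnd p.2
      = (1 - qInt n) * qBernoulliSnd n
        + (1 - qInt ((n : ℤ) - 1)) * qBernoulliSndInt ((n : ℤ) - 1) := by
  have h := congrArg (coeff n) main_ps
  rw [map_add, map_add, coeff_X_mul_Dq_F n] at h
  have hres : coeff n (rescale q F * F)
      = ∑ p ∈ antidiagonal n, q ^ p.1 * qBernoulliSnd p.1 * qBernoulliSnd p.2 := by
    rw [coeff_mul]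
    refine Finset.sum_congr rfl fun p _ => ?_
    rw [coeff_rescale]
    simp only [F, coeff_mk]
  rw [hres] at h
  cases n with
  | zero =>
    rw [coeff_zero_X_mul] at h
    have hco : coeff 0 ((1 + X) * F) = qBernoulliSnd 0 := by
      rw [add_mul, one_mul, map_add, coeff_zero_X_mul]
      simp [F]
    rw [hco] at h
    have h1 : qBernoulliSndInt ((0 : ℕ) - 1 : ℤ) = 0 := by
      simp [qBernoulliSndInt]
    rw [h1]
    simp only [Nat.cast_zero, qInt_zero] at h ⊢
    linear_combination h
  | succ m =>
    rw [coeff_succ_X_mul, coeff_X_mul_Dq_F m] at h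
    have hco : coeff (m + 1) ((1 + X) * F)
        = qBernoulliSnd (m + 1) + qBernoulliSnd m := by
      rw [add_mul, one_mul, map_add, coeff_succ_X_mul]
      simp [F]
    rw [hco] at h
    have h1 : ((m + 1 : ℕ) : ℤ) - 1 = (m : ℤ) := by push_cast; ring
    rw [h1]
    have h2 : qBernoulliSndInt (m : ℤ) = qBernoulliSnd m := by
      simp [qBernoulliSndInt]
    rw [h2]
    push_cast
    push_cast at h
    linear_combination h

lemma inv_mul_one_sub_qInt (m : ℤ) :
    (q : R)⁻¹ * (1 - qInt m) = -qInt (m - 1) := by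
  have hpow : (q : R) ^ m = q * q ^ (m - 1) := by
    rw [← zpow_one_add₀ hq0]
    congr 1
    ring
  rw [qInt, qInt, hpow]
  generalize (q : R) ^ (m - 1) = y
  field_simp [hq0, h1X]
  ring

end QB

theorem sum_qpow_mul_qBernoulliSnd (n : ℕ) :
    ∑ k ∈ Finset.range (n + 1),
        (RatFunc.X : RatFunc ℚ) ^ ((k : ℤ) - 1) * qBernoulliSnd k *
          qBernoulliSnd (n - k) =
      -qInt ((n : ℤ) - 1) * qBernoulliSnd n
        - qInt ((n : ℤ) - 2) * qBernoulliSndInt ((n : ℤ) - 1) := by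
  have h := QB.key n
  rw [Finset.Nat.sum_antidiagonal_eq_sum_range_succ
    (f := fun a b => QB.q ^ a * qBernoulliSnd a * qBernoulliSnd b)] at h
  have hterm : ∀ k ∈ Finset.range (n + 1),
      (RatFunc.X : RatFunc ℚ) ^ ((k : ℤ) - 1) * qBernoulliSnd k * qBernoulliSnd (n - k)
        = (RatFunc.X : RatFunc ℚ)⁻¹ *
            (QB.q ^ k * qBernoulliSnd k * qBernoulliSnd (n - k)) := by
    intro k _
    rw [zpow_sub₀ QB.hq0, zpow_one, zpow_natCast]
    ring
  rw [Finset.sum_congr rfl hterm, ← Finset.mul_sum, h]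
  have e1 := QB.inv_mul_one_sub_qInt (n : ℤ)
  have e2 := QB.inv_mul_one_sub_qInt ((n : ℤ) - 1)
  rw [show (n : ℤ) - 1 - 1 = (n : ℤ) - 2 by ring] at e2
  linear_combination qBernoulliSnd n * e1 + qBernoulliSndInt ((n : ℤ) - 1) * e2
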